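/- Let b ∈ (0,1) and c, τ > 0, and define F(φ)(t) = (Bφ)(t) − (1−b)·(Bφ)(t)·(SBφ)(t). Then for all bounded continuous functions φ, ψ : ℝ → ℝ with 0 ≤ φ(t) ≤ ψ(t) ≤ 1 for all t ∈ ℝ, the nonstandard quasi-monotonicity inequality holds: (SB(ψ−φ))(t) + F(ψ)(t) − F(φ)(t) ≥ 0 for all t ∈ ℝ. Indeed this quantity equals ((Bψ)(t) − (Bφ)(t))·(1 − (1−b)·(SBψ)(t)) + ((SBψ)(t) − (SBφ)(t))·(1 − (1−b)·(Bφ)(t)), and both summands are nonnegative. -/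
import Mathlib


/-- `(Bφ)(t) = Σ_{j≥0} b^j φ(t − j·c·τ)`. -/
noncomputable def Bop (b c τ : ℝ) (φ : ℝ → ℝ) (t : ℝ) : ℝ :=
  ∑' j : ℕ, b ^ j * φ (t - (j : ℝ) * c * τ)

/-- `(SBφ)(t) = Σ_{j≥0} b^j φ(t − (j+1)·c·τ)`. -/
noncomputable def SBop (b c τ : ℝ) (φ : ℝ → ℝ) (t : ℝ) : ℝ :=
  ∑' j : ℕ, b ^ j * φ (t - ((j : ℝ) + 1) * c * τ)

/-- The nonlinearity `F(φ)(t) = (Bφ)(t) − (1−b)(Bφ)(t)(SBφ)(t)`. -/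
noncomputable def Fop (b c τ : ℝ) (φ : ℝ → ℝ) (t : ℝ) : ℝ :=
  Bop b c τ φ t - (1 - b) * Bop b c τ φ t * SBop b c τ φ t

/-- Nonstandard quasi-monotonicity: for bounded continuous `0 ≤ φ ≤ ψ ≤ 1`,
`SB(ψ−φ) + F(ψ) − F(φ) ≥ 0`; indeed it equals
`(Bψ − Bφ)(1 − (1−b)SBψ) + (SBψ − SBφ)(1 − (1−b)Bφ)`, a sum of two nonnegative terms. -/
theorem nonstandard_quasimonotonicity (b c τ : ℝ) (hb : b ∈ Set.Ioo (0 : ℝ) 1)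
    (hc : 0 < c) (hτ : 0 < τ) (φ ψ : ℝ → ℝ)
    (hφc : Continuous φ) (hψc : Continuous ψ)
    (hord : ∀ t : ℝ, 0 ≤ φ t ∧ φ t ≤ ψ t ∧ ψ t ≤ 1) :
    ∀ t : ℝ,
      SBop b c τ (fun r => ψ r - φ r) t + Fop b c τ ψ t - Fop b c τ φ t =
        (Bop b c τ ψ t - Bop b c τ φ t) * (1 - (1 - b) * SBop b c τ ψ t)
        + (SBop b c τ ψ t - SBop b c τ φ t) * (1 - (1 - b) * Bop b c τ φ t) ∧
      0 ≤ (Bop b c τ ψ t - Bop b c τ φ t) * (1 - (1 - b) * SBop b c τ ψ t) ∧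
      0 ≤ (SBop b c τ ψ t - SBop b c τ φ t) * (1 - (1 - b) * Bop b c τ φ t) ∧
      0 ≤ SBop b c τ (fun r => ψ r - φ r) t + Fop b c τ ψ t - Fop b c τ φ t := by
  obtain ⟨hb0, hb1⟩ := hb
  intro t
  -- summability helper
  have key : ∀ f : ℕ → ℝ, (∀ j, 0 ≤ f j) → (∀ j, f j ≤ 1) →
      Summable (fun j => b ^ j * f j) := by
    intro f h0 h1
    refine Summable.of_nonneg_of_le (fun j => mul_nonneg (pow_nonneg hb0.le _) (h0 j))
      (fun j => ?_) (summable_geometric_of_lt_one hb0.le hb1)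
    calc b ^ j * f j ≤ b ^ j * 1 :=
          mul_le_mul_of_nonneg_left (h1 j) (pow_nonneg hb0.le j)
      _ = b ^ j := mul_one _
  have hφ0 : ∀ r, 0 ≤ φ r := fun r => (hord r).1
  have hφ1 : ∀ r, φ r ≤ 1 := fun r => le_trans (hord r).2.1 (hord r).2.2
  have hψ0 : ∀ r, 0 ≤ ψ r := fun r => le_trans (hφ0 r) (hord r).2.1
  have hψ1 : ∀ r, ψ r ≤ 1 := fun r => (hord r).2.2
  have SBφ : Summable (fun j : ℕ => b ^ j * φ (t - (j : ℝ) * c * τ)) :=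
    key _ (fun j => hφ0 _) (fun j => hφ1 _)
  have SBψ : Summable (fun j : ℕ => b ^ j * ψ (t - (j : ℝ) * c * τ)) :=
    key _ (fun j => hψ0 _) (fun j => hψ1 _)
  have SSφ : Summable (fun j : ℕ => b ^ j * φ (t - ((j : ℝ) + 1) * c * τ)) :=
    key _ (fun j => hφ0 _) (fun j => hφ1 _)
  have SSψ : Summable (fun j : ℕ => b ^ j * ψ (t - ((j : ℝ) + 1) * c * τ)) :=
    key _ (fun j => hψ0 _) (fun j => hψ1 _)
  have hSBsub : SBop b c τ (fun r => ψ r - φ r) t = SBop b c τ ψ t - SBop b c τ φ t := by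
    unfold SBop
    rw [← Summable.tsum_sub SSψ SSφ]
    congr 1; funext j; ring
  -- monotonicity
  have hBmono : Bop b c τ φ t ≤ Bop b c τ ψ t :=
    Summable.tsum_le_tsum (fun j => mul_le_mul_of_nonneg_left ((hord _).2.1) (pow_nonneg hb0.le j))
      SBφ SBψ
  have hSBmono : SBop b c τ φ t ≤ SBop b c τ ψ t :=
    Summable.tsum_le_tsum (fun j => mul_le_mul_of_nonneg_left ((hord _).2.1) (pow_nonneg hb0.le j))
      SSφ SSψ
  -- upper bounds
  have hgeo : ∑' j : ℕ, b ^ j = (1 - b)⁻¹ := tsum_geometric_of_lt_one hb0.le hb1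
  have hub : ∀ f : ℕ → ℝ, (∀ j, 0 ≤ f j) → (∀ j, f j ≤ 1) →
      (1 - b) * (∑' j : ℕ, b ^ j * f j) ≤ 1 := by
    intro f h0 h1
    have hle : (∑' j : ℕ, b ^ j * f j) ≤ (1 - b)⁻¹ := by
      rw [← hgeo]
      refine Summable.tsum_le_tsum (fun j => ?_) (key f h0 h1)
        (summable_geometric_of_lt_one hb0.le hb1)
      calc b ^ j * f j ≤ b ^ j * 1 :=
            mul_le_mul_of_nonneg_left (h1 j) (pow_nonneg hb0.le j)
        _ = b ^ j := mul_one _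
    have h1b : (0:ℝ) < 1 - b := by linarith
    calc (1 - b) * (∑' j : ℕ, b ^ j * f j) ≤ (1 - b) * (1 - b)⁻¹ :=
          mul_le_mul_of_nonneg_left hle h1b.le
      _ = 1 := mul_inv_cancel₀ h1b.ne'
  have hubSBψ : (1 - b) * SBop b c τ ψ t ≤ 1 :=
    hub _ (fun j => hψ0 _) (fun j => hψ1 _)
  have hubBφ : (1 - b) * Bop b c τ φ t ≤ 1 :=
    hub _ (fun j => hφ0 _) (fun j => hφ1 _)
  have heq : SBop b c τ (fun r => ψ r - φ r) t + Fop b c τ ψ t - Fop b c τ φ t =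
      (Bop b c τ ψ t - Bop b c τ φ t) * (1 - (1 - b) * SBop b c τ ψ t)
      + (SBop b c τ ψ t - SBop b c τ φ t) * (1 - (1 - b) * Bop b c τ φ t) := by
    rw [hSBsub]; unfold Fop; ring
  have h1 : 0 ≤ (Bop b c τ ψ t - Bop b c τ φ t) * (1 - (1 - b) * SBop b c τ ψ t) :=
    mul_nonneg (by linarith) (by linarith)
  have h2 : 0 ≤ (SBop b c τ ψ t - SBop b c τ φ t) * (1 - (1 - b) * Bop b c τ φ t) :=
    mul_nonneg (by linarith) (by linarith)
  exact ⟨heq, h1, h2, by rw [heq]; linarith⟩
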